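/- Let $f : [0,\infty) \to \mathbb{R}$ be strictly convex, continuously differentiable on $(0,\infty)$, with superlinear growth at infinity and $\lim_{x \to 0^+} f'(x) = -\infty$. Then for any $C \in \mathbb{R}$ and any continuous $v : Y \to \mathbb{R}$ on compact $Y \subset \mathbb{R}$, the function $y \mapsto (f')^{-1}(C - v(y))$ is well-defined, positive, and continuous, and there exists a unique constant $C$ such that $\int_Y (f')^{-1}(C - v(y))\, dy = 1$. -/

import Mathlib

open MeasureTheory Set Filter
open scoped ENNReal NNReal Topology

/-- Well-posedness of the normalization step in the congestion iterative scheme: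
`y ↦ (f')⁻¹(C - v(y))` is well defined, positive and continuous, and there is a unique
constant `C` making it a probability density on `Y`. -/
theorem stmt7 (f fd : ℝ → ℝ)
    (hconv : StrictConvexOn ℝ (Set.Ici 0) f)
    (hderiv : ∀ x > (0:ℝ), HasDerivAt f (fd x) x)
    (hfdcont : ContinuousOn fd (Set.Ioi 0))
    (hsuper : Tendsto (fun x => f x / x) atTop atTop)
    (hzero : Tendsto fd (𝓝[>] (0:ℝ)) atBot)
    (hrange : ∀ r : ℝ, ∃ t > (0:ℝ), fd t = r)
    (Y : Set ℝ) (hYc : IsCompact Y) (hYm : 0 < volume Y)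
    (v : ℝ → ℝ) (hv : ContinuousOn v Y) :
    ∃ h : ℝ → ℝ → ℝ,
      (∀ C y, 0 < h C y ∧ fd (h C y) = C - v y) ∧
      (∀ C y t, 0 < t → fd t = C - v y → t = h C y) ∧
      (∀ C, ContinuousOn (h C) Y) ∧
      (∃! C : ℝ, ∫ y in Y, h C y = 1) := by
  classical
  -- fd is strictly monotone on Ioi 0
  have hmono : StrictMonoOn fd (Set.Ioi 0) := by
    intro x hx y hy hxy
    have hx' : x ∈ Set.Ici (0:ℝ) := Set.mem_Ici.2 (le_of_lt hx)
    have hy' : y ∈ Set.Ici (0:ℝ) := Set.mem_Ici.2 (le_of_lt hy)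
    have h1 := hconv.lt_slope_of_hasDerivWithinAt_Ioi hx' hy' hxy
      ((hderiv x hx).hasDerivWithinAt)
    have h2 := hconv.slope_lt_of_hasDerivWithinAt_Iio hx' hy' hxy
      ((hderiv y hy).hasDerivWithinAt)
    exact h1.trans h2
  -- the bundled strictly monotone surjective map
  set F : Set.Ioi (0:ℝ) → ℝ := fun t => fd t with hF
  have hFmono : StrictMono F := fun a b hab => hmono a.2 b.2 hab
  have hFsurj : Function.Surjective F := by
    intro r
    obtain ⟨t, ht, hfd⟩ := hrange r
    exact ⟨⟨t, ht⟩, hfd⟩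
  set e : Set.Ioi (0:ℝ) ≃o ℝ := StrictMono.orderIsoOfSurjective F hFmono hFsurj with he
  set g : ℝ → ℝ := fun r => (e.symm r : ℝ) with hg
  have hgpos : ∀ r, 0 < g r := fun r => (e.symm r).2
  have hfdg : ∀ r, fd (g r) = r := fun r =>
    StrictMono.orderIsoOfSurjective_self_symm_apply F hFmono hFsurj r
  have hgfd : ∀ t (ht : 0 < t), g (fd t) = t := by
    intro t ht
    exact congrArg Subtype.val
      (StrictMono.orderIsoOfSurjective_symm_apply_self F hFmono hFsurj ⟨t, ht⟩)
  have hgmono : StrictMono g := fun a b hab =>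
    Subtype.coe_lt_coe.2 (e.symm.strictMono hab)
  have hgcont : Continuous g :=
    continuous_subtype_val.comp (OrderIso.continuous e.symm)
  -- definition of h
  set h : ℝ → ℝ → ℝ := fun C y => g (C - v y) with hdef
  have hpos : ∀ C y, 0 < h C y ∧ fd (h C y) = C - v y := fun C y =>
    ⟨hgpos _, hfdg _⟩
  have huniq : ∀ C y t, 0 < t → fd t = C - v y → t = h C y := by
    intro C y t ht hfdt
    have := hgfd t ht
    rw [hfdt] at this
    exact this.symm
  have hcont : ∀ C, ContinuousOn (h C) Y := fun C =>
    hgcont.comp_continuousOn (continuousOn_const.sub hv)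
  refine ⟨h, hpos, huniq, hcont, ?_⟩
  -- setup for the integral
  have Ymeas : MeasurableSet Y := hYc.measurableSet
  have hfin : volume Y < ⊤ := hYc.measure_lt_top
  have hvolpos : 0 < (volume Y).toReal := ENNReal.toReal_pos hYm.ne' hfin.ne
  have hinteg : ∀ C, IntegrableOn (h C) Y := fun C =>
    (hcont C).integrableOn_compact hYc
  set I : ℝ → ℝ := fun C => ∫ y in Y, h C y with hI
  -- monotonicity of h in C
  have hhmono : ∀ y, ∀ C C', C ≤ C' → h C y ≤ h C' y := by
    intro y C C' hle
    exact hgmono.monotone (by linarith)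
  -- strict monotonicity of I
  have hImono : StrictMono I := by
    intro C C' hCC
    have hlt : ∀ y, h C y < h C' y := fun y => hgmono (by linarith)
    have hdiff : IntegrableOn (fun y => h C' y - h C y) Y :=
      (hinteg C').sub (hinteg C)
    have hposI : 0 < ∫ y in Y, (h C' y - h C y) := by
      rw [MeasureTheory.setIntegral_pos_iff_support_of_nonneg_ae
        (Filter.Eventually.of_forall fun y => sub_nonneg.2 (hlt y).le) hdiff]
      have : Function.support (fun y => h C' y - h C y) ∩ Y = Y := by
        ext y
        simp only [Set.mem_inter_iff, Function.mem_support, and_iff_right_iff_imp]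
        intro _
        exact fun hc => absurd hc (sub_ne_zero.2 (hlt y).ne')
      rw [this]
      exact hYm
    have : I C' - I C = ∫ y in Y, (h C' y - h C y) := by
      rw [MeasureTheory.integral_sub (hinteg C') (hinteg C)]
    linarith
  -- continuity of I
  have hIcont : Continuous I := by
    rw [continuous_iff_continuousAt]
    intro C₀
    apply MeasureTheory.continuousAt_of_dominated
      (bound := fun y => h (C₀ + 1) y)
    · exact Filter.Eventually.of_forall fun C =>
        ((hcont C).aestronglyMeasurable Ymeas)
    · have hmem : Set.Icc (C₀ - 1) (C₀ + 1) ∈ 𝓝 C₀ :=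
        Icc_mem_nhds (by linarith) (by linarith)
      filter_upwards [hmem] with C hC
      refine Filter.Eventually.of_forall fun y => ?_
      rw [Real.norm_eq_abs, abs_of_pos (hgpos _)]
      exact hhmono y C (C₀ + 1) hC.2
    · exact hinteg (C₀ + 1)
    · refine Filter.Eventually.of_forall fun y => ?_
      exact (hgcont.comp (continuous_id.sub continuous_const)).continuousAt
  -- bounds on v
  have hYne : Y.Nonempty := by
    by_contra hne
    rw [Set.not_nonempty_iff_eq_empty] at hne
    simp [hne] at hYm
  obtain ⟨yM, hyM, hmax⟩ := hYc.exists_isMaxOn hYne hv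
  obtain ⟨ym, hym, hmin⟩ := hYc.exists_isMinOn hYne hv
  set M := v yM
  set m := v ym
  -- upper existence: choose C₂ with I C₂ ≥ 2
  set t₂ : ℝ := 2 / (volume Y).toReal with ht₂def
  have ht₂pos : 0 < t₂ := div_pos two_pos hvolpos
  set C₂ : ℝ := fd t₂ + M with hC₂def
  have hI₂ : 2 ≤ I C₂ := by
    have hpt : ∀ y ∈ Y, t₂ ≤ h C₂ y := by
      intro y hy
      have hvy : v y ≤ M := hmax hy
      have : fd t₂ ≤ C₂ - v y := by
        rw [hC₂def]; linarith
      calc t₂ = g (fd t₂) := (hgfd t₂ ht₂pos).symm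
        _ ≤ g (C₂ - v y) := hgmono.monotone this
    have hconst : ∫ y in Y, t₂ = (volume Y).toReal * t₂ := by
      rw [MeasureTheory.setIntegral_const, smul_eq_mul]; rfl
    have : ∫ y in Y, t₂ ≤ I C₂ :=
      MeasureTheory.setIntegral_mono_on
        (integrableOn_const hfin.ne) (hinteg C₂) Ymeas hpt
    rw [hconst, ht₂def, mul_div_cancel₀ _ hvolpos.ne'] at this
    exact this
  -- lower existence: choose C₁ with I C₁ ≤ 1/2
  set t₁ : ℝ := (1/2) / (volume Y).toReal with ht₁def
  have ht₁pos : 0 < t₁ := div_pos one_half_pos hvolpos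
  set C₁ : ℝ := fd t₁ + m with hC₁def
  have hI₁ : I C₁ ≤ 1/2 := by
    have hpt : ∀ y ∈ Y, h C₁ y ≤ t₁ := by
      intro y hy
      have hvy : m ≤ v y := hmin hy
      have : C₁ - v y ≤ fd t₁ := by
        rw [hC₁def]; linarith
      calc h C₁ y = g (C₁ - v y) := rfl
        _ ≤ g (fd t₁) := hgmono.monotone this
        _ = t₁ := hgfd t₁ ht₁pos
    have hconst : ∫ y in Y, t₁ = (volume Y).toReal * t₁ := by
      rw [MeasureTheory.setIntegral_const, smul_eq_mul]; rfl
    have : I C₁ ≤ ∫ y in Y, t₁ :=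
      MeasureTheory.setIntegral_mono_on (hinteg C₁)
        (integrableOn_const hfin.ne) Ymeas hpt
    rw [hconst, ht₁def, mul_div_cancel₀ _ hvolpos.ne'] at this
    exact this
  -- IVT
  have hC₁₂ : C₁ ≤ C₂ := by
    by_contra hcon
    push_neg at hcon
    have := hImono hcon
    linarith
  have hmem : (1:ℝ) ∈ Set.Icc (I C₁) (I C₂) := ⟨by linarith, by linarith⟩
  obtain ⟨C, hCmem, hCeq⟩ := intermediate_value_Icc hC₁₂ (hIcont.continuousOn) hmem
  refine ⟨C, hCeq, ?_⟩
  intro C' hC'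
  have h1 : I C' = 1 := hC'
  have h2 : I C = 1 := hCeq
  by_contra hne
  rcases lt_or_gt_of_ne hne with hlt | hlt
  · have := hImono hlt; linarith
  · have := hImono hlt; linarith
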